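/- Let f : ℝⁿ → ℝ be differentiable with L₁-Lipschitz gradient, and suppose x^{k+1} = xᵏ − s·sign(mᵏ) coordinatewise with step s > 0 (so ‖x^{k+1} − xᵏ‖² = n s²). Then f(x^{k+1}) ≤ f(xᵏ) − s ‖∇f(xᵏ)‖₁ + (n L₁/2) s² + 2s ∑_{j=1}^n |∇_j f(xᵏ)| · 1{sign(m_jᵏ) ≠ sign(∇_j f(xᵏ))}. -/

import Mathlib

open Finset

/-- Descent lemma for functions with Lipschitz gradient. -/
theorem descent_aux {F : Type*} [NormedAddCommGroup F] [InnerProductSpace ℝ F]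
    [CompleteSpace F] (f : F → ℝ) (g : F → F) (L : ℝ) (hL : 0 ≤ L)
    (hgrad : ∀ z, HasGradientAt f (g z) z)
    (hlip : ∀ a b, ‖g a - g b‖ ≤ L * ‖a - b‖) (x y : F) :
    f y ≤ f x + inner ℝ (g x) (y - x) + L / 2 * ‖y - x‖ ^ 2 := by
  set v := y - x with hv
  set φ : ℝ → ℝ := fun t => f (x + t • v) - t * inner ℝ (g x) v - L * t ^ 2 * ‖v‖ ^ 2 / 2 with hφ
  have hline : ∀ t : ℝ, HasDerivAt (fun t : ℝ => x + t • v) v t := by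
    intro t
    simpa using ((hasDerivAt_id t).smul_const v).const_add x
  have hφ' : ∀ t : ℝ, HasDerivAt φ
      ((inner ℝ (g (x + t • v)) v : ℝ) - inner ℝ (g x) v - L * t * ‖v‖ ^ 2) t := by
    intro t
    have h1 : HasDerivAt (fun t : ℝ => f (x + t • v)) (inner ℝ (g (x + t • v)) v : ℝ) t := by
      have := ((hgrad (x + t • v)).hasFDerivAt).comp_hasDerivAt t (hline t)
      simpa [InnerProductSpace.toDual_apply_apply, Function.comp_def] using this
    have h2 : HasDerivAt (fun t : ℝ => t * (inner ℝ (g x) v : ℝ)) (inner ℝ (g x) v : ℝ) t := by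
      simpa using (hasDerivAt_id t).mul_const (inner ℝ (g x) v : ℝ)
    have h3 : HasDerivAt (fun t : ℝ => L * t ^ 2 * ‖v‖ ^ 2 / 2) (L * t * ‖v‖ ^ 2) t := by
      have := ((hasDerivAt_pow 2 t).const_mul L).mul_const (‖v‖ ^ 2)
      have := this.div_const 2
      refine this.congr_deriv ?_
      ring
    have := (h1.sub h2).sub h3
    exact this.congr_deriv (by ring)
  have hderiv_nonpos : ∀ t ∈ Set.Ioo (0:ℝ) 1, deriv φ t ≤ 0 := by
    intro t ht
    rw [(hφ' t).deriv]
    have hb : (inner ℝ (g (x + t • v)) v : ℝ) - inner ℝ (g x) v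
        = inner ℝ (g (x + t • v) - g x) v := by rw [inner_sub_left]
    rw [hb]
    have h1 : (inner ℝ (g (x + t • v) - g x) v : ℝ) ≤ ‖g (x + t • v) - g x‖ * ‖v‖ :=
      real_inner_le_norm _ _
    have h2 : ‖g (x + t • v) - g x‖ ≤ L * (t * ‖v‖) := by
      have := hlip (x + t • v) x
      simpa [norm_smul, abs_of_pos ht.1, mul_assoc] using this
    have h3 : ‖g (x + t • v) - g x‖ * ‖v‖ ≤ L * (t * ‖v‖) * ‖v‖ :=
      mul_le_mul_of_nonneg_right h2 (norm_nonneg _)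
    nlinarith [norm_nonneg v]
  have hcont : ContinuousOn φ (Set.Icc 0 1) :=
    (fun t _ => ((hφ' t).continuousAt).continuousWithinAt)
  have hanti : AntitoneOn φ (Set.Icc (0:ℝ) 1) := by
    apply antitoneOn_of_deriv_nonpos (convex_Icc 0 1) hcont
    · intro t ht
      rw [interior_Icc] at ht
      exact (hφ' t).differentiableAt.differentiableWithinAt
    · intro t ht
      rw [interior_Icc] at ht
      exact hderiv_nonpos t ht
  have h01 : φ 1 ≤ φ 0 := hanti (by norm_num) (by norm_num) zero_le_one
  simp only [hφ, one_smul, zero_smul, add_zero, one_pow] at h01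
  have hxy : x + v = y := by rw [hv]; abel
  rw [hxy] at h01
  nlinarith [h01]

theorem sign_descent_lemma {n : ℕ} (f : EuclideanSpace ℝ (Fin n) → ℝ)
    (g : EuclideanSpace ℝ (Fin n) → EuclideanSpace ℝ (Fin n))
    (L₁ : ℝ) (hL : 0 ≤ L₁)
    (hgrad : ∀ z, HasGradientAt f (g z) z)
    (hlip : ∀ a b, ‖g a - g b‖ ≤ L₁ * ‖a - b‖)
    (x m y : EuclideanSpace ℝ (Fin n)) (s : ℝ) (hs : 0 < s)
    (hy : ∀ j, y j = x j - s * Real.sign (m j)) :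
    f y ≤ f x - s * (∑ j, |g x j|) + ((n : ℝ) * L₁ / 2) * s ^ 2
      + 2 * s * ∑ j, |g x j| *
          (if Real.sign (m j) ≠ Real.sign (g x j) then (1:ℝ) else 0) := by
  have key := descent_aux f g L₁ hL hgrad hlip x y
  have hsub : ∀ j, (y - x) j = -(s * Real.sign (m j)) := by
    intro j
    simp [hy j]
  have hinner : (inner ℝ (g x) (y - x) : ℝ) = ∑ j, g x j * (-(s * Real.sign (m j))) := by
    rw [PiLp.inner_apply]
    exact Finset.sum_congr rfl fun j _ => by rw [hsub j, Real.inner_apply]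
  have hnorm : ‖y - x‖ ^ 2 ≤ (n : ℝ) * s ^ 2 := by
    rw [← real_inner_self_eq_norm_sq, PiLp.inner_apply]
    have : ∀ j ∈ Finset.univ, (inner ℝ ((y-x) j) ((y-x) j) : ℝ) ≤ s ^ 2 := by
      intro j _
      rw [hsub j]
      have := Real.sign_apply_eq (m j)
      simp only [RCLike.inner_apply, conj_trivial]
      rcases Real.sign_apply_eq (m j) with h | h | h <;> rw [h] <;> nlinarith
    calc ∑ j, (inner ℝ ((y-x) j) ((y-x) j) : ℝ) ≤ ∑ _j : Fin n, s ^ 2 :=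
          Finset.sum_le_sum this
      _ = (n : ℝ) * s ^ 2 := by simp [mul_comm]
  have hsum : ∑ j, g x j * (-(s * Real.sign (m j)))
      ≤ -(s * ∑ j, |g x j|) + 2 * s * ∑ j, |g x j| *
          (if Real.sign (m j) ≠ Real.sign (g x j) then (1:ℝ) else 0) := by
    have hrhs : -(s * ∑ j, |g x j|) + 2 * s * ∑ j, |g x j| *
        (if Real.sign (m j) ≠ Real.sign (g x j) then (1:ℝ) else 0)
        = ∑ j, (-(s * |g x j|) + 2 * s * (|g x j| *
            (if Real.sign (m j) ≠ Real.sign (g x j) then (1:ℝ) else 0))) := by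
      rw [Finset.mul_sum, Finset.mul_sum, ← Finset.sum_neg_distrib, ← Finset.sum_add_distrib]
    rw [hrhs]
    apply Finset.sum_le_sum
    intro j _
    by_cases hsgn : Real.sign (m j) ≠ Real.sign (g x j)
    · simp only [if_pos hsgn]
      rcases Real.sign_apply_eq (m j) with h | h | h <;> rw [h] <;>
        nlinarith [abs_nonneg (g x j), le_abs_self (g x j), neg_abs_le (g x j)]
    · simp only [if_neg hsgn, mul_zero, mul_zero, add_zero]
      push_neg at hsgn
      rw [hsgn]
      rcases lt_trichotomy (g x j) 0 with h | h | h
      · rw [Real.sign_of_neg h, abs_of_neg h]; nlinarith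
      · simp [h]
      · rw [Real.sign_of_pos h, abs_of_pos h]; nlinarith
  have h2 : L₁ / 2 * ‖y - x‖ ^ 2 ≤ (n : ℝ) * L₁ / 2 * s ^ 2 := by nlinarith [hnorm]
  rw [hinner] at key
  linarith [key, hsum, h2]
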